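/- Let φ₁ = X + 1, φ₂ = X - 1, φ₃ = 2(X² - 1) ∈ ℚ(X). Then φ₁, φ₂, φ₃ are multiplicatively independent (no nonzero integer exponent vector makes their product equal to 1 as a rational function), but they are not multiplicatively independent modulo constants (since φ₁·φ₂·φ₃^{-1} = 1/2 is constant). Moreover, for every integer m ≥ 2, setting α_m = 2^m - 1 one has φ₁(α_m)^{-(m+1)} · φ₂(α_m)^{-m} · φ₃(α_m)^{m} = 1. -/

import Mathlib

open Polynomial in
private theorem polyA (a₁ a₂ b₁ b₂ : ℕ) (c : ℚ) (hc : c ≠ 0)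
    (h : (X + 1 : ℚ[X]) ^ a₁ * (X - 1) ^ b₁ = C c * ((X + 1) ^ a₂ * (X - 1) ^ b₂)) :
    a₁ = a₂ ∧ b₁ = b₂ := by
  have hp : (X + 1 : ℚ[X]) = X - C (-1) := by simp
  have hq : (X - 1 : ℚ[X]) = X - C 1 := by simp
  have hpne : ∀ n : ℕ, ((X + 1 : ℚ[X]) ^ n) ≠ 0 := fun n =>
    pow_ne_zero n (by rw [hp]; exact X_sub_C_ne_zero _)
  have hqne : ∀ n : ℕ, ((X - 1 : ℚ[X]) ^ n) ≠ 0 := fun n =>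
    pow_ne_zero n (by rw [hq]; exact X_sub_C_ne_zero _)
  have hCne : (C c : ℚ[X]) ≠ 0 := by simpa using hc
  have hL : ((X + 1 : ℚ[X]) ^ a₁ * (X - 1) ^ b₁) ≠ 0 := mul_ne_zero (hpne _) (hqne _)
  have hR2 : ((X + 1 : ℚ[X]) ^ a₂ * (X - 1) ^ b₂) ≠ 0 := mul_ne_zero (hpne _) (hqne _)
  have hrmp : ∀ n : ℕ, rootMultiplicity (-1) ((X + 1 : ℚ[X]) ^ n) = n := fun n => by
    rw [hp, rootMultiplicity_X_sub_C_pow]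
  have hrmp1 : ∀ n : ℕ, rootMultiplicity 1 ((X - 1 : ℚ[X]) ^ n) = n := fun n => by
    rw [hq, rootMultiplicity_X_sub_C_pow]
  have hrmq : ∀ n : ℕ, rootMultiplicity (-1) ((X - 1 : ℚ[X]) ^ n) = 0 := fun n =>
    rootMultiplicity_eq_zero (by simp [IsRoot]; rintro h; norm_num at h)
  have hrmq1 : ∀ n : ℕ, rootMultiplicity 1 ((X + 1 : ℚ[X]) ^ n) = 0 := fun n =>
    rootMultiplicity_eq_zero (by simp [IsRoot])
  constructor
  · have h1 := congrArg (rootMultiplicity (-1)) h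
    rw [rootMultiplicity_mul hL, rootMultiplicity_mul (h ▸ hL),
      rootMultiplicity_mul hR2, rootMultiplicity_C, hrmp, hrmp, hrmq, hrmq] at h1
    omega
  · have h1 := congrArg (rootMultiplicity 1) h
    rw [rootMultiplicity_mul hL, rootMultiplicity_mul (h ▸ hL),
      rootMultiplicity_mul hR2, rootMultiplicity_C, hrmp1, hrmp1, hrmq1, hrmq1] at h1
    omega

private theorem hXp1 : (RatFunc.X + 1 : RatFunc ℚ) ≠ 0 := by
  rw [show (RatFunc.X + 1 : RatFunc ℚ) =
      algebraMap (Polynomial ℚ) (RatFunc ℚ) (Polynomial.X + 1) by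
    push_cast [map_add, map_one, RatFunc.algebraMap_X]; rfl]
  exact RatFunc.algebraMap_ne_zero (by
    intro hc
    have := congrArg (fun p => Polynomial.coeff p 1) hc
    simp [Polynomial.coeff_one] at this)

private theorem hXm1 : (RatFunc.X - 1 : RatFunc ℚ) ≠ 0 := by
  rw [show (RatFunc.X - 1 : RatFunc ℚ) =
      algebraMap (Polynomial ℚ) (RatFunc ℚ) (Polynomial.X - 1) by
    push_cast [map_sub, map_one, RatFunc.algebraMap_X]; rfl]
  exact RatFunc.algebraMap_ne_zero (by
    intro hc
    have := congrArg (fun p => Polynomial.coeff p 1) hc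
    simp [Polynomial.coeff_one] at this)

private theorem lemA (a b : ℤ) (c : ℚ) (hc : c ≠ 0)
    (h : (RatFunc.X + 1 : RatFunc ℚ) ^ a * (RatFunc.X - 1) ^ b = RatFunc.C c) :
    a = 0 ∧ b = 0 := by
  set p : RatFunc ℚ := RatFunc.X + 1 with hpdef
  set q : RatFunc ℚ := RatFunc.X - 1 with hqdef
  have hp : p ≠ 0 := hXp1
  have hq : q ≠ 0 := hXm1
  have ea : ((a.toNat : ℤ)) = a + ((-a).toNat : ℤ) := by omega
  have eb : ((b.toNat : ℤ)) = b + ((-b).toNat : ℤ) := by omega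
  have key : p ^ (a.toNat : ℤ) * q ^ (b.toNat : ℤ)
      = RatFunc.C c * (p ^ ((-a).toNat : ℤ) * q ^ ((-b).toNat : ℤ)) := by
    rw [ea, eb, zpow_add₀ hp, zpow_add₀ hq,
      show p ^ a * p ^ ((-a).toNat : ℤ) * (q ^ b * q ^ ((-b).toNat : ℤ))
        = p ^ a * q ^ b * (p ^ ((-a).toNat : ℤ) * q ^ ((-b).toNat : ℤ)) by ring, h]
  simp only [zpow_natCast] at key
  have key2 : algebraMap (Polynomial ℚ) (RatFunc ℚ)
        ((Polynomial.X + 1) ^ a.toNat * (Polynomial.X - 1) ^ b.toNat)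
      = algebraMap (Polynomial ℚ) (RatFunc ℚ)
        (Polynomial.C c * ((Polynomial.X + 1) ^ (-a).toNat * (Polynomial.X - 1) ^ (-b).toNat)) := by
    push_cast [map_mul, map_pow, map_add, map_sub, map_one, RatFunc.algebraMap_X,
      RatFunc.algebraMap_C]
    exact key
  have hpoly := RatFunc.algebraMap_injective ℚ key2
  obtain ⟨h1, h2⟩ := polyA _ _ _ _ c hc hpoly
  omega

private theorem two_ne : (2 : RatFunc ℚ) ≠ 0 := by
  intro h
  rw [← map_ofNat (RatFunc.C : ℚ →+* RatFunc ℚ) 2,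
    ← map_zero (RatFunc.C : ℚ →+* RatFunc ℚ)] at h
  exact (two_ne_zero : (2:ℚ) ≠ 0) (RingHom.injective _ h)



theorem hXsq : (RatFunc.X ^ 2 - 1 : RatFunc ℚ) ≠ 0 := by
  have h : (RatFunc.X ^ 2 - 1 : RatFunc ℚ) =
      algebraMap (Polynomial ℚ) (RatFunc ℚ) (Polynomial.X ^ 2 - 1) := by
    push_cast [map_sub, map_pow, map_one, RatFunc.algebraMap_X]; rfl
  rw [h]
  apply RatFunc.algebraMap_ne_zero
  intro hc
  have := congrArg (fun p => Polynomial.coeff p 2) hc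
  simp [Polynomial.coeff_one] at this


/-- For `φ₁ = X + 1`, `φ₂ = X - 1`, `φ₃ = 2(X² - 1)` in `ℚ(X)`:
(1) they are multiplicatively independent;
(2) they are not multiplicatively independent modulo constants, since
    `φ₁ · φ₂ · φ₃⁻¹ = 1/2`;
(3) for every `m ≥ 2`, with `α_m = 2^m - 1`,
    `φ₁(α_m)^{-(m+1)} · φ₂(α_m)^{-m} · φ₃(α_m)^m = 1`. -/
theorem stmt_4 :
    (∀ k₁ k₂ k₃ : ℤ,
        (RatFunc.X + 1 : RatFunc ℚ) ^ k₁ * (RatFunc.X - 1) ^ k₂ *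
          (2 * (RatFunc.X ^ 2 - 1)) ^ k₃ = 1 →
        k₁ = 0 ∧ k₂ = 0 ∧ k₃ = 0) ∧
    ((RatFunc.X + 1 : RatFunc ℚ) ^ (1 : ℤ) * (RatFunc.X - 1) ^ (1 : ℤ) *
        (2 * (RatFunc.X ^ 2 - 1)) ^ (-1 : ℤ) = RatFunc.C (1 / 2)) ∧
    (∀ m : ℕ, 2 ≤ m →
      ((2 ^ m - 1 : ℚ) + 1) ^ (-(m + 1 : ℤ)) * ((2 ^ m - 1 : ℚ) - 1) ^ (-(m : ℤ)) *
        (2 * ((2 ^ m - 1 : ℚ) ^ 2 - 1)) ^ (m : ℤ) = 1) := by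
  refine ⟨?_, ?_, ?_⟩
  · intro k₁ k₂ k₃ h
    set p : RatFunc ℚ := RatFunc.X + 1 with hpdef
    set q : RatFunc ℚ := RatFunc.X - 1 with hqdef
    have hp : p ≠ 0 := hXp1
    have hq : q ≠ 0 := hXm1
    have hfac : (2 * (RatFunc.X ^ 2 - 1) : RatFunc ℚ) = 2 * (p * q) := by
      rw [hpdef, hqdef]; ring
    rw [hfac, mul_zpow, mul_zpow] at h
    have h2K : ((2 : RatFunc ℚ)) ^ k₃ ≠ 0 := zpow_ne_zero _ two_ne
    have key : p ^ (k₁ + k₃) * q ^ (k₂ + k₃) = RatFunc.C ((2 : ℚ) ^ (-k₃)) := by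
      have hC : ((2 : RatFunc ℚ)) ^ (-k₃) = RatFunc.C ((2 : ℚ) ^ (-k₃)) := by
        rw [map_zpow₀, map_ofNat]
      rw [zpow_add₀ hp, zpow_add₀ hq, ← hC, zpow_neg]
      refine eq_inv_of_mul_eq_one_right ?_
      calc (2 : RatFunc ℚ) ^ k₃ * (p ^ k₁ * p ^ k₃ * (q ^ k₂ * q ^ k₃))
          = p ^ k₁ * q ^ k₂ * ((2 : RatFunc ℚ) ^ k₃ * (p ^ k₃ * q ^ k₃)) := by ring
        _ = 1 := h
    obtain ⟨e1, e2⟩ := lemA _ _ _ (zpow_ne_zero _ (two_ne_zero : (2:ℚ) ≠ 0)) key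
    have hk3 : k₃ = 0 := by
      rw [e1, e2, zpow_zero, zpow_zero, one_mul] at key
      have : ((2 : ℚ) ^ (-k₃)) = 1 := by
        have := key.symm
        rw [show (1 : RatFunc ℚ) = RatFunc.C 1 from (map_one _).symm] at this
        exact RingHom.injective (RatFunc.C : ℚ →+* RatFunc ℚ) this
      have := (zpow_eq_one_iff_right₀ (by norm_num : (0:ℚ) ≤ 2) (by norm_num)).mp this
      omega
    refine ⟨by omega, by omega, hk3⟩
  · rw [zpow_one, zpow_one, zpow_neg_one]
    have h1 : (RatFunc.X + 1 : RatFunc ℚ) * (RatFunc.X - 1) = RatFunc.X^2 - 1 := by ring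
    have h2 : (RatFunc.C (1/2) : RatFunc ℚ) = 2⁻¹ := by
      rw [show ((1:ℚ)/2) = 2⁻¹ by norm_num, map_inv₀, map_ofNat]
    rw [h1, mul_inv, show (RatFunc.X^2 - 1 : RatFunc ℚ) * (2⁻¹ * (RatFunc.X^2-1)⁻¹)
      = (RatFunc.X^2-1) * (RatFunc.X^2-1)⁻¹ * 2⁻¹ by ring, mul_inv_cancel₀ hXsq, one_mul, h2]
  · intro m hm
    have ha : (2:ℚ)^m ≠ 0 := by positivity
    have hb : (2:ℚ)^m - 2 ≠ 0 := by
      have : (2:ℚ) < 2^m := by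
        calc (2:ℚ) = 2^1 := (pow_one 2).symm
        _ < 2^m := by exact pow_lt_pow_right₀ one_lt_two (by omega)
      linarith
    have h1 : ((2:ℚ)^m - 1) + 1 = 2^m := by ring
    have h2 : ((2:ℚ)^m - 1) - 1 = 2^m - 2 := by ring
    have h3 : 2 * (((2:ℚ)^m - 1)^2 - 1) = (2^m) * ((2^m - 2) * 2) := by ring
    rw [h1, h2, h3, mul_zpow, mul_zpow]
    field_simp [zpow_neg]
    have h4 : ((2:ℚ)^m)^(-1 + -(m:ℤ)) = ((2:ℚ)^(m*m+m))⁻¹ := by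
      rw [show (-1 + -(m:ℤ)) = -((m:ℤ)+1) by ring, zpow_neg]
      congr 1
      rw [show ((m:ℤ)+1) = ((m+1:ℕ):ℤ) by push_cast; ring, zpow_natCast, ← pow_mul]
      ring_nf
    have h5 : ((2:ℚ)^m)^m * (((2:ℚ)^m-2)^m * 2^m) = (2:ℚ)^(m*m+m) * ((2:ℚ)^m-2)^m := by
      rw [pow_add, ← pow_mul]; ring
    rw [show (-((m:ℤ)+1)) = -(((m+1:ℕ):ℤ)) by push_cast; ring]
    simp only [zpow_neg, zpow_natCast]
    rw [pow_succ]
    field_simp
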